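/- Consider binary classification data $(a_i, y_i)$ for $i = 1,\ldots,n$ with $\|a_i\| \leq 1$ and $y_i \in \{\pm 1\}$, which is linearly separable with margin $\tau > 0$: there exists a unit vector $x^*$ with $y_i a_i^T x^* \geq \tau$ for all $i$. Let $\ell: \mathbb{R} \to \mathbb{R}$ be a differentiable monotonic non-increasing function and define $f_i(x) = \ell(y_i a_i^T x)$ and $f = \frac{1}{n}\sum_{i=1}^n f_i$. Then the strong growth condition holds with $\rho \leq n/\tau^2$: for all $x \in \mathbb{R}^d$, $\frac{1}{n}\sum_{i=1}^n \|\nabla f_i(x)\|^2 \leq \frac{n}{\tau^2}\|\nabla f(x)\|^2$. -/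

import Mathlib

open scoped RealInnerProductSpace

noncomputable section

lemma hasGradientAt_comp_inner (d : ℕ) (a x : EuclideanSpace ℝ (Fin d)) (c : ℝ)
    (ℓ : ℝ → ℝ) (hℓ : Differentiable ℝ ℓ) :
    HasGradientAt (fun x => ℓ (c * ⟪a, x⟫)) ((deriv ℓ (c * ⟪a, x⟫) * c) • a) x := by
  have hL : HasFDerivAt (fun x : EuclideanSpace ℝ (Fin d) => c * ⟪a, x⟫) (c • innerSL ℝ a) x := by
    exact (c • innerSL ℝ a).hasFDerivAt (x := x)
  have h := (hℓ (c * ⟪a, x⟫)).hasDerivAt.comp_hasFDerivAt x hL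
  rw [hasGradientAt_iff_hasFDerivAt]
  refine h.congr_fderiv ?_
  ext v
  simp [InnerProductSpace.toDual_apply_apply, mul_smul]

/-- On linearly separable data with margin `τ`, losses of the form
`f_i(x) = ℓ(y_i ⟪a_i, x⟫)` with `ℓ` differentiable and non-increasing satisfy
the strong growth condition with constant `n / τ²`. -/
theorem sgc_for_separable_monotone_losses
    (d n : ℕ) (hn : 0 < n)
    (a : Fin n → EuclideanSpace ℝ (Fin d))
    (y : Fin n → ℝ) (hy : ∀ i, y i = 1 ∨ y i = -1)
    (ha : ∀ i, ‖a i‖ ≤ 1)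
    (τ : ℝ) (hτ : 0 < τ)
    (xstar : EuclideanSpace ℝ (Fin d)) (hxs : ‖xstar‖ = 1)
    (hmargin : ∀ i, τ ≤ y i * ⟪a i, xstar⟫)
    (ℓ : ℝ → ℝ) (hℓdiff : Differentiable ℝ ℓ)
    (hℓmono : ∀ t : ℝ, deriv ℓ t ≤ 0)
    (f : Fin n → EuclideanSpace ℝ (Fin d) → ℝ)
    (hf : ∀ i x, f i x = ℓ (y i * ⟪a i, x⟫))
    (F : EuclideanSpace ℝ (Fin d) → ℝ)
    (hF : F = fun x => (n : ℝ)⁻¹ * ∑ i, f i x) :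
    ∀ x, (n : ℝ)⁻¹ * ∑ i, ‖gradient (f i) x‖ ^ 2
      ≤ ((n : ℝ) / τ ^ 2) * ‖gradient F x‖ ^ 2 := by
  intro x
  set g : Fin n → ℝ := fun i => deriv ℓ (y i * ⟪a i, x⟫) with hg
  set v : Fin n → EuclideanSpace ℝ (Fin d) := fun i => (g i * y i) • a i with hv
  -- gradients of the f i
  have hgradfi : ∀ i, HasGradientAt (f i) (v i) x := by
    intro i
    have := hasGradientAt_comp_inner d (a i) x (y i) ℓ hℓdiff
    apply this.congr_of_eventuallyEq
    filter_upwards with z using (hf i z)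
  -- gradient of F
  have hgradF : HasGradientAt F ((n : ℝ)⁻¹ • ∑ i, v i) x := by
    rw [hasGradientAt_iff_hasFDerivAt]
    have hsum : HasFDerivAt (fun z => ∑ i, f i z)
        (∑ i, InnerProductSpace.toDual ℝ _ (v i)) x := by
      exact HasFDerivAt.fun_sum fun i _ =>
        (hasGradientAt_iff_hasFDerivAt.mp (hgradfi i))
    have := hsum.const_mul ((n : ℝ)⁻¹)
    rw [hF]
    refine this.congr_fderiv ?_
    simp [smul_smul]
  have hvi : ∀ i, gradient (f i) x = v i := fun i => (hgradfi i).gradient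
  have hvF : gradient F x = (n : ℝ)⁻¹ • ∑ i, v i := hgradF.gradient
  have hy2 : ∀ i, (y i) ^ 2 = 1 := by
    intro i; rcases hy i with h | h <;> simp [h]
  -- bound each term
  have hterm : ∀ i, ‖v i‖ ^ 2 ≤ (-(g i)) ^ 2 := by
    intro i
    have : ‖v i‖ = |g i * y i| * ‖a i‖ := by
      rw [hv]; simp [norm_smul, abs_mul]
    rw [this, mul_pow, sq_abs, mul_pow, hy2, mul_one, neg_pow]
    have h1 : ‖a i‖ ^ 2 ≤ 1 := by
      have := ha i; nlinarith [norm_nonneg (a i)]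
    nlinarith [sq_nonneg (g i)]
  set S : ℝ := ∑ i, (-(g i)) with hS
  have hSnn : 0 ≤ S := Finset.sum_nonneg fun i _ => neg_nonneg.mpr (hℓmono _)
  -- inner product with xstar lower bounds the norm of the sum
  have hinner : τ * S ≤ ⟪-∑ i, v i, xstar⟫ := by
    rw [inner_neg_left, sum_inner]
    have : ∀ i, ⟪v i, xstar⟫ ≤ g i * τ := by
      intro i
      rw [hv]
      simp only [real_inner_smul_left]
      have hgle : g i ≤ 0 := hℓmono _
      calc (g i * y i) * ⟪a i, xstar⟫ = g i * (y i * ⟪a i, xstar⟫) := by ring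
        _ ≤ g i * τ := by
          rcases eq_or_lt_of_le hgle with h | h
          · simp [h]
          · exact (mul_le_mul_left_of_neg h).mpr (hmargin i)
    calc τ * S = ∑ i, -(g i * τ) := by rw [hS, Finset.mul_sum]; congr 1; ext i; ring
      _ ≤ -∑ i, ⟪v i, xstar⟫ := by
          rw [← Finset.sum_neg_distrib]
          exact Finset.sum_le_sum fun i _ => neg_le_neg (this i)
  have hnormsum : τ * S ≤ ‖∑ i, v i‖ := by
    calc τ * S ≤ ⟪-∑ i, v i, xstar⟫ := hinner
      _ ≤ ‖-∑ i, v i‖ * ‖xstar‖ := real_inner_le_norm _ _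
      _ = ‖∑ i, v i‖ := by rw [hxs, norm_neg, mul_one]
  -- sum of squares bound
  have hsq : ∑ i, ‖v i‖ ^ 2 ≤ S ^ 2 := by
    calc ∑ i, ‖v i‖ ^ 2 ≤ ∑ i, (-(g i)) ^ 2 := Finset.sum_le_sum fun i _ => hterm i
      _ ≤ S ^ 2 := Finset.sum_sq_le_sq_sum_of_nonneg fun i _ => neg_nonneg.mpr (hℓmono _)
  -- put everything together
  have hnpos : (0:ℝ) < n := Nat.cast_pos.mpr hn
  have hnormF : ‖gradient F x‖ = (n : ℝ)⁻¹ * ‖∑ i, v i‖ := by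
    rw [hvF, norm_smul, Real.norm_eq_abs, abs_of_pos (inv_pos.mpr hnpos)]
  have hτS : (τ * S) ^ 2 ≤ ‖∑ i, v i‖ ^ 2 := by
    have h0 : 0 ≤ τ * S := mul_nonneg hτ.le hSnn
    nlinarith [norm_nonneg (∑ i, v i)]
  calc (n : ℝ)⁻¹ * ∑ i, ‖gradient (f i) x‖ ^ 2
      = (n : ℝ)⁻¹ * ∑ i, ‖v i‖ ^ 2 := by simp only [hvi]
    _ ≤ (n : ℝ)⁻¹ * S ^ 2 := mul_le_mul_of_nonneg_left hsq (by positivity)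
    _ ≤ ((n : ℝ) / τ ^ 2) * ‖gradient F x‖ ^ 2 := by
        rw [hnormF]
        have hc : ((n : ℝ) / τ ^ 2) * ((n : ℝ)⁻¹ * ‖∑ i, v i‖) ^ 2
            = (n : ℝ)⁻¹ * (τ ^ 2)⁻¹ * ‖∑ i, v i‖ ^ 2 := by
          field_simp
        rw [hc]
        rw [mul_assoc]
        apply mul_le_mul_of_nonneg_left _ (by positivity)
        rw [← div_le_iff₀' (by positivity), div_eq_mul_inv, mul_comm, inv_inv]
        nlinarith [hτS]
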